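/- Let n ≥ 1, let F : ℝⁿ × ℝ → ℝⁿ, and let V : ℝⁿ → ℝ be differentiable with constants c₁, c₂, c₃, c₄ > 0 such that for all E ∈ ℝⁿ and u ∈ ℝ: c₁‖E‖² ≤ V(E) ≤ c₂‖E‖², ⟨∇V(E), F(E, u)⟩ ≤ −c₃‖E‖², and ‖∇V(E)‖ ≤ c₄‖E‖. Let m ≥ 0, r ∈ ℝ, and let 0 < λ < 4c₃/[1 + c₄(1 + m)]². Let E : [0, ∞) → ℝⁿ, u : [0, ∞) → ℝ be differentiable and G : [0, ∞) → ℝⁿ satisfy ‖G(t)‖ ≤ 1 + m for all t, with Ė(t) = F(E(t), u(t)) + G(t)·u̇(t) and u̇(t) = λ·e(t), where e(t) = r − u(t) + E₁(t) and E₁ denotes the first coordinate of E. Then there exists κ > 0 such that V̄(t) = V(E(t)) + ½(r − u(t))² satisfies V̄(t) ≤ V̄(0)·e^{−κt} for all t ≥ 0; hence E(t) → 0 and u(t) → r exponentially. -/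

import Mathlib

private lemma quadA {c₃ ε lam Kp a q : ℝ} (hc : ε < c₃)
    (hq : 0 ≤ q)
    (hdisc : lam ^ 2 * Kp ^ 2 ≤ 4 * (c₃ - ε) * (lam - ε)) :
    -c₃ * a ^ 2 + lam * Kp * a * q - lam * q ^ 2 ≤ -ε * (a ^ 2 + q ^ 2) := by
  nlinarith [sq_nonneg (2 * (c₃ - ε) * a - lam * Kp * q), sq_nonneg q, sq_nonneg a,
    mul_pos (sub_pos.mpr hc) (sub_pos.mpr hc)]

private lemma quadB {ε κ c₂ vE a q E1 b : ℝ} (hκε : κ * (3 * (c₂ + 1)) = ε)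
    (hκ : 0 < κ) (hc₂ : 0 < c₂) (hVE : vE ≤ c₂ * a ^ 2) (hE1 : E1 ^ 2 ≤ a ^ 2)
    (hb : b = q - E1) :
    -ε * (a ^ 2 + q ^ 2) ≤ -κ * (vE + b ^ 2 / 2) := by
  subst hb
  have key : vE + (q - E1) ^ 2 / 2 ≤ (c₂ + 1) * (a ^ 2 + q ^ 2) := by
    nlinarith [sq_nonneg (q + E1)]
  have h1 := mul_le_mul_of_nonneg_left key hκ.le
  have h2 : 0 ≤ κ * ((c₂ + 1) * (a ^ 2 + q ^ 2)) := by positivity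
  nlinarith [h1, h2]

private lemma le_of_sq_le_sq' {x y : ℝ} (hx : 0 ≤ x) (hy : 0 ≤ y) (h : x ^ 2 ≤ y ^ 2) :
    x ≤ y := by
  calc x = Real.sqrt (x ^ 2) := (Real.sqrt_sq hx).symm
    _ ≤ Real.sqrt (y ^ 2) := Real.sqrt_le_sqrt h
    _ = y := Real.sqrt_sq hy


set_option maxHeartbeats 2000000 in
/-- Higher-order extension: the normal-form error state `E` obeys
`Ė = F(E,u) + G u̇` with exponentially stable open-loop error dynamics `F`
(converse-Lyapunov function `V`), feedforward direction `‖G‖ ≤ 1 + m`, and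
integral control `u̇ = λe`, `e = r − u + E₁`. For
`0 < λ < 4c₃/[1 + c₄(1+m)]²`, the closed-loop Lyapunov function
`V̄ = V(E) + ½(r−u)²` decays exponentially and `E → 0`, `u → r` exponentially. -/
theorem higher_order_exponential_stability
    (n : ℕ) (hn : 0 < n)
    (F : EuclideanSpace ℝ (Fin n) → ℝ → EuclideanSpace ℝ (Fin n))
    (V : EuclideanSpace ℝ (Fin n) → ℝ) (hV : Differentiable ℝ V)
    (c₁ c₂ c₃ c₄ : ℝ) (hc₁ : 0 < c₁) (hc₂ : 0 < c₂) (hc₃ : 0 < c₃) (hc₄ : 0 < c₄)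
    (hVlow : ∀ E : EuclideanSpace ℝ (Fin n), c₁ * ‖E‖ ^ 2 ≤ V E)
    (hVhigh : ∀ E : EuclideanSpace ℝ (Fin n), V E ≤ c₂ * ‖E‖ ^ 2)
    (hVdecay : ∀ (E : EuclideanSpace ℝ (Fin n)) (u : ℝ),
      (inner ℝ (gradient V E) (F E u) : ℝ) ≤ -c₃ * ‖E‖ ^ 2)
    (hVslope : ∀ E : EuclideanSpace ℝ (Fin n), ‖gradient V E‖ ≤ c₄ * ‖E‖)
    (m : ℝ) (hm : 0 ≤ m) (r lam : ℝ) (hlam : 0 < lam)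
    (hlam' : lam < 4 * c₃ / (1 + c₄ * (1 + m)) ^ 2)
    (E : ℝ → EuclideanSpace ℝ (Fin n)) (u : ℝ → ℝ)
    (G : ℝ → EuclideanSpace ℝ (Fin n))
    (hG : ∀ t : ℝ, ‖G t‖ ≤ 1 + m)
    (hE : ∀ t, 0 ≤ t →
      HasDerivAt E
        (F (E t) (u t) + (lam * (r - u t + E t ⟨0, hn⟩)) • G t) t)
    (hu : ∀ t, 0 ≤ t → HasDerivAt u (lam * (r - u t + E t ⟨0, hn⟩)) t) :
    ∃ κ > 0,
      (∀ t, 0 ≤ t →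
        V (E t) + (r - u t) ^ 2 / 2
          ≤ (V (E 0) + (r - u 0) ^ 2 / 2) * Real.exp (-κ * t)) ∧
      ∃ M γ : ℝ, 0 < γ ∧
        (∀ t, 0 ≤ t → ‖E t‖ ≤ M * Real.exp (-γ * t)) ∧
        (∀ t, 0 ≤ t → |u t - r| ≤ M * Real.exp (-γ * t)) := by
  set K := c₄ * (1 + m) with hKdef
  have hK0 : 0 < K := by positivity
  have h4 : lam * (1 + K) ^ 2 < 4 * c₃ := by
    rw [lt_div_iff₀ (by positivity)] at hlam'
    exact hlam'
  set ε := (4 * lam * c₃ - lam ^ 2 * (1 + K) ^ 2) / (4 * (lam + c₃)) with hεdef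
  have hεnum : ε * (4 * (lam + c₃)) = 4 * lam * c₃ - lam ^ 2 * (1 + K) ^ 2 := by
    rw [hεdef]; field_simp
  have hε : 0 < ε := by
    apply div_pos; · nlinarith
    · positivity
  have hεlam : ε < lam := by
    rw [hεdef, div_lt_iff₀ (by positivity)]; nlinarith
  have hεc₃ : ε < c₃ := by
    rw [hεdef, div_lt_iff₀ (by positivity)]; nlinarith
  have hdisc : lam ^ 2 * (1 + K) ^ 2 ≤ 4 * (c₃ - ε) * (lam - ε) := by
    nlinarith [sq_nonneg ε, hεnum]
  set κ := ε / (3 * (c₂ + 1)) with hκdef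
  have hκ : 0 < κ := by positivity
  have hκε : κ * (3 * (c₂ + 1)) = ε := by rw [hκdef]; field_simp
  have hcoord : ∀ x : EuclideanSpace ℝ (Fin n), |x ⟨0, hn⟩| ≤ ‖x‖ := by
    intro x
    have h := abs_real_inner_le_norm (EuclideanSpace.single (⟨0, hn⟩ : Fin n) (1 : ℝ)) x
    simpa [EuclideanSpace.inner_single_left, EuclideanSpace.norm_single] using h
  set W : ℝ → ℝ := fun t => V (E t) + (r - u t) ^ 2 / 2 with hWdef
  have hWnn : ∀ t, 0 ≤ W t := by
    intro t
    have h1 := hVlow (E t)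
    have h2 : (0:ℝ) ≤ c₁ * ‖E t‖ ^ 2 := by positivity
    simp only [hWdef]
    nlinarith [sq_nonneg (r - u t)]
  -- derivative of W
  have hd : ∀ t, 0 ≤ t → HasDerivAt W
      ((inner ℝ (gradient V (E t))
          (F (E t) (u t) + (lam * (r - u t + E t ⟨0, hn⟩)) • G t) : ℝ)
        - lam * (r - u t + E t ⟨0, hn⟩) * (r - u t)) t := by
    intro t ht
    have h1 : HasDerivAt (fun s => V (E s))
        ((inner ℝ (gradient V (E t))
          (F (E t) (u t) + (lam * (r - u t + E t ⟨0, hn⟩)) • G t) : ℝ)) t := by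
      have hg := (hV (E t)).hasGradientAt
      have h2 := (hasGradientAt_iff_hasFDerivAt.mp hg).comp_hasDerivAt t (hE t ht)
      rw [InnerProductSpace.toDual_apply_apply] at h2
      exact h2
    have h2 : HasDerivAt (fun s => (r - u s) ^ 2 / 2)
        (-(lam * (r - u t + E t ⟨0, hn⟩)) * (r - u t)) t := by
      have h3 := (((hasDerivAt_const t r).sub (hu t ht)).pow 2).div_const 2
      exact h3.congr_deriv (by simp only [Pi.sub_apply]; push_cast; ring)
    have := h1.add h2
    exact this.congr_deriv (by ring)
  -- pointwise decay bound
  have hbound : ∀ t, 0 ≤ t →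
      ((inner ℝ (gradient V (E t))
          (F (E t) (u t) + (lam * (r - u t + E t ⟨0, hn⟩)) • G t) : ℝ)
        - lam * (r - u t + E t ⟨0, hn⟩) * (r - u t)) ≤ -κ * W t := by
    intro t ht
    set a := ‖E t‖ with hadef
    set q := r - u t + E t ⟨0, hn⟩ with hqdef
    set g := gradient V (E t) with hgdef
    have ha0 : 0 ≤ a := norm_nonneg _
    have hinner : (inner ℝ g (F (E t) (u t) + (lam * q) • G t) : ℝ)
        = (inner ℝ g (F (E t) (u t)) : ℝ) + (lam * q) * (inner ℝ g (G t) : ℝ) := by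
      rw [inner_add_right, real_inner_smul_right]
    have h1 : (inner ℝ g (F (E t) (u t)) : ℝ) ≤ -c₃ * a ^ 2 := hVdecay _ _
    have h2 : (lam * q) * (inner ℝ g (G t) : ℝ) ≤ lam * |q| * (K * a) := by
      calc (lam * q) * (inner ℝ g (G t) : ℝ) ≤ |(lam * q) * (inner ℝ g (G t) : ℝ)| :=
            le_abs_self _
        _ = lam * |q| * |(inner ℝ g (G t) : ℝ)| := by
            rw [abs_mul, abs_mul, abs_of_pos hlam]
        _ ≤ lam * |q| * (‖g‖ * ‖G t‖) := by
            apply mul_le_mul_of_nonneg_left (abs_real_inner_le_norm _ _)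
            positivity
        _ ≤ lam * |q| * ((c₄ * a) * (1 + m)) := by
            apply mul_le_mul_of_nonneg_left _ (by positivity)
            exact mul_le_mul (hVslope _) (hG t) (norm_nonneg _) (by positivity)
        _ = lam * |q| * (K * a) := by rw [hKdef]; ring
    have hE1 : |E t ⟨0, hn⟩| ≤ a := hcoord _
    have hE1sq : (E t ⟨0, hn⟩) ^ 2 ≤ a ^ 2 := by
      nlinarith [sq_abs (E t ⟨0, hn⟩), abs_nonneg (E t ⟨0, hn⟩)]
    have hqE : lam * (q * (E t ⟨0, hn⟩)) ≤ lam * (|q| * a) := by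
      apply mul_le_mul_of_nonneg_left _ (le_of_lt hlam)
      calc q * (E t ⟨0, hn⟩) ≤ |q * (E t ⟨0, hn⟩)| := le_abs_self _
        _ = |q| * |E t ⟨0, hn⟩| := abs_mul _ _
        _ ≤ |q| * a := mul_le_mul_of_nonneg_left hE1 (abs_nonneg _)
    have hVE : V (E t) ≤ c₂ * a ^ 2 := hVhigh _
    have hb : r - u t = q - E t ⟨0, hn⟩ := by rw [hqdef]; ring
    -- quadratic form bound
    have hA : -c₃ * a ^ 2 + lam * (1 + K) * a * |q| - lam * q ^ 2 ≤ -ε * (a ^ 2 + q ^ 2) := by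
      have h := quadA (a := a) (q := |q|) (Kp := 1 + K) hεc₃ (abs_nonneg q) hdisc
      simpa [sq_abs] using h
    have hB : -ε * (a ^ 2 + q ^ 2) ≤ -κ * W t := by
      simp only [hWdef]
      exact quadB hκε hκ hc₂ hVE hE1sq hb
    have habs : lam * q ^ 2 = lam * |q| ^ 2 := by rw [sq_abs]
    calc (inner ℝ g (F (E t) (u t) + (lam * q) • G t) : ℝ) - lam * q * (r - u t)
        = (inner ℝ g (F (E t) (u t)) : ℝ) + (lam * q) * (inner ℝ g (G t) : ℝ)
          - lam * q ^ 2 + lam * (q * (E t ⟨0, hn⟩)) := by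
          rw [hinner, hb]; ring
      _ ≤ -c₃ * a ^ 2 + lam * |q| * (K * a) - lam * q ^ 2 + lam * (|q| * a) := by
          linarith
      _ = -c₃ * a ^ 2 + lam * (1 + K) * a * |q| - lam * q ^ 2 := by ring
      _ ≤ -ε * (a ^ 2 + q ^ 2) := hA
      _ ≤ -κ * W t := hB
  -- Gronwall
  have hdecay : ∀ t, 0 ≤ t → W t ≤ W 0 * Real.exp (-κ * t) := by
    intro t ht
    set Φ : ℝ → ℝ := fun s => W s * Real.exp (κ * s) with hΦdef
    have hΦd : ∀ s, 0 ≤ s → HasDerivAt Φ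
        (((inner ℝ (gradient V (E s))
            (F (E s) (u s) + (lam * (r - u s + E s ⟨0, hn⟩)) • G s) : ℝ)
          - lam * (r - u s + E s ⟨0, hn⟩) * (r - u s)) * Real.exp (κ * s)
          + W s * (Real.exp (κ * s) * κ)) s := by
      intro s hs
      have hexp : HasDerivAt (fun s : ℝ => Real.exp (κ * s)) (Real.exp (κ * s) * κ) s := by
        simpa using ((hasDerivAt_id s).const_mul κ).exp
      exact (hd s hs).mul hexp
    have hanti : AntitoneOn Φ (Set.Ici 0) := by
      apply antitoneOn_of_deriv_nonpos (convex_Ici 0)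
      · intro s hs
        exact ((hΦd s hs).continuousAt).continuousWithinAt
      · intro s hs
        rw [interior_Ici] at hs
        exact ((hΦd s (le_of_lt hs)).differentiableAt).differentiableWithinAt
      · intro s hs
        rw [interior_Ici] at hs
        rw [(hΦd s (le_of_lt hs)).deriv]
        have hb := hbound s (le_of_lt hs)
        have hep := Real.exp_pos (κ * s)
        have hw := hWnn s
        nlinarith
    have h0 : Φ t ≤ Φ 0 := hanti Set.self_mem_Ici ht ht
    have : W t * Real.exp (κ * t) ≤ W 0 := by
      simpa [hΦdef] using h0
    have hep := Real.exp_pos (κ * t)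
    have := mul_le_mul_of_nonneg_right this (le_of_lt (Real.exp_pos (-κ * t)))
    calc W t = W t * Real.exp (κ * t) * Real.exp (-κ * t) := by
          rw [mul_assoc, ← Real.exp_add]; simp
      _ ≤ W 0 * Real.exp (-κ * t) := this
  have hW00 : W 0 = V (E 0) + (r - u 0) ^ 2 / 2 := by simp only [hWdef]
  refine ⟨κ, hκ, hdecay, Real.sqrt (max (W 0 / c₁) (2 * W 0)), κ / 2, by positivity, ?_, ?_⟩
  · intro t ht
    have hMnn : (0:ℝ) ≤ max (W 0 / c₁) (2 * W 0) :=
      le_trans (div_nonneg (hWnn 0) hc₁.le) (le_max_left _ _)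
    have hMsq : Real.sqrt (max (W 0 / c₁) (2 * W 0)) ^ 2 = max (W 0 / c₁) (2 * W 0) :=
      Real.sq_sqrt hMnn
    apply le_of_sq_le_sq' (norm_nonneg _) (by positivity)
    have hexp2 : Real.exp (-(κ / 2) * t) ^ 2 = Real.exp (-κ * t) := by
      rw [sq, ← Real.exp_add]; ring_nf
    rw [mul_pow, hMsq, hexp2]
    have h1 : c₁ * ‖E t‖ ^ 2 ≤ W 0 * Real.exp (-κ * t) :=
      le_trans (le_trans (hVlow (E t)) (by simp only [hWdef]; nlinarith [sq_nonneg (r - u t)]))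
        (hdecay t ht)
    have h2 : W 0 ≤ c₁ * max (W 0 / c₁) (2 * W 0) := by
      have := le_max_left (W 0 / c₁) (2 * W 0)
      calc W 0 = c₁ * (W 0 / c₁) := by field_simp
        _ ≤ c₁ * max (W 0 / c₁) (2 * W 0) := by
            apply mul_le_mul_of_nonneg_left this (le_of_lt hc₁)
    have hep : (0:ℝ) < Real.exp (-κ * t) := Real.exp_pos _
    have h3 : c₁ * ‖E t‖ ^ 2 ≤ c₁ * (max (W 0 / c₁) (2 * W 0) * Real.exp (-κ * t)) := by
      calc c₁ * ‖E t‖ ^ 2 ≤ W 0 * Real.exp (-κ * t) := h1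
        _ ≤ c₁ * max (W 0 / c₁) (2 * W 0) * Real.exp (-κ * t) := by
            apply mul_le_mul_of_nonneg_right h2 (le_of_lt hep)
        _ = c₁ * (max (W 0 / c₁) (2 * W 0) * Real.exp (-κ * t)) := by ring
    exact le_of_mul_le_mul_left (by linarith) hc₁
  · intro t ht
    have hMnn : (0:ℝ) ≤ max (W 0 / c₁) (2 * W 0) :=
      le_trans (div_nonneg (hWnn 0) hc₁.le) (le_max_left _ _)
    have hMsq : Real.sqrt (max (W 0 / c₁) (2 * W 0)) ^ 2 = max (W 0 / c₁) (2 * W 0) :=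
      Real.sq_sqrt hMnn
    apply le_of_sq_le_sq' (abs_nonneg _) (by positivity)
    have hexp2 : Real.exp (-(κ / 2) * t) ^ 2 = Real.exp (-κ * t) := by
      rw [sq, ← Real.exp_add]; ring_nf
    rw [mul_pow, hMsq, hexp2, sq_abs]
    have h1 : (r - u t) ^ 2 / 2 ≤ W 0 * Real.exp (-κ * t) := by
      have hw := hdecay t ht
      have hv := hVlow (E t)
      have : (0:ℝ) ≤ c₁ * ‖E t‖ ^ 2 := by positivity
      simp only [hWdef] at hw
      nlinarith [hW00]
    have h2 : 2 * W 0 ≤ max (W 0 / c₁) (2 * W 0) := le_max_right _ _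
    have hep : (0:ℝ) < Real.exp (-κ * t) := Real.exp_pos _
    calc (u t - r) ^ 2 = (r - u t) ^ 2 := by ring
      _ ≤ 2 * W 0 * Real.exp (-κ * t) := by
          simp only [hWdef] at h1 ⊢; linarith
      _ ≤ max (W 0 / c₁) (2 * W 0) * Real.exp (-κ * t) := by
          apply mul_le_mul_of_nonneg_right h2 (le_of_lt hep)
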